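/- Let F_X = {X ⪰ 0 : A(X) = b} be a G-invariant spectrahedron (i.e., PXPᵀ ∈ F_X for all X ∈ F_X and P ∈ G). If W ⪰ 0 is an exposing vector of rank d for a face containing F_X (i.e., ⟨W, X⟩ = 0 for all X ∈ F_X), then W_G = (1/|G|) Σ_{P∈G} PᵀWP is also an exposing vector (⟨W_G, X⟩ = 0 for all X ∈ F_X), W_G lies in the commutant A_G, and rank(W_G) ≥ d. -/

import Mathlib

open Matrix

/-- `P` is a permutation matrix. -/
def IsPermMatrix {n : ℕ} (P : Matrix (Fin n) (Fin n) ℝ) : Prop :=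
  ∃ σ : Equiv.Perm (Fin n), ∀ i j, P i j = if i = σ j then 1 else 0

lemma IsPermMatrix.transpose_mul_self {n : ℕ} {P : Matrix (Fin n) (Fin n) ℝ}
    (h : IsPermMatrix P) : Pᵀ * P = 1 := by
  obtain ⟨σ, hσ⟩ := h
  ext i j
  simp only [Matrix.mul_apply, Matrix.transpose_apply, hσ, Matrix.one_apply]
  rw [Finset.sum_eq_single (σ i)]
  · simp [σ.injective.eq_iff, eq_comm]
  · intro k _ hk; simp [hk]
  · simp

lemma IsPermMatrix.self_mul_transpose {n : ℕ} {P : Matrix (Fin n) (Fin n) ℝ}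
    (h : IsPermMatrix P) : P * Pᵀ = 1 := by
  obtain ⟨σ, hσ⟩ := h
  ext i j
  simp only [Matrix.mul_apply, Matrix.transpose_apply, hσ, Matrix.one_apply]
  rw [Finset.sum_eq_single (σ.symm i)]
  · simp [Equiv.eq_symm_apply, eq_comm]
  · intro k _ hk
    rcases eq_or_ne i (σ k) with h1 | h1
    · exact absurd (by simp [h1]) hk
    · simp [h1]
  · simp

lemma sum_mulVec' {n : ℕ} {ι : Type*} (s : Finset ι) (A : ι → Matrix (Fin n) (Fin n) ℝ)
    (x : Fin n → ℝ) : (∑ i ∈ s, A i) *ᵥ x = ∑ i ∈ s, A i *ᵥ x := by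
  ext j
  simp only [Matrix.mulVec, dotProduct, Matrix.sum_apply, Finset.sum_apply,
    Finset.sum_mul]
  rw [Finset.sum_comm]

lemma dotProduct_sum' {n : ℕ} {ι : Type*} (s : Finset ι) (x : Fin n → ℝ)
    (v : ι → Fin n → ℝ) : x ⬝ᵥ (∑ i ∈ s, v i) = ∑ i ∈ s, x ⬝ᵥ v i := by
  simp [dotProduct, Finset.mul_sum]
  rw [Finset.sum_comm]

/-- If `F = {X ⪰ 0 : 𝒜(X) = b}` is a `G`-invariant spectrahedron and `W ⪰ 0` is an
exposing vector of rank `d` for a face containing `F` (i.e. `⟨W,X⟩ = 0` on `F`), then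
`W_G = (1/|G|) Σ_{P∈G} PᵀWP` is also an exposing vector, lies in the commutant of `G`,
and has rank at least `d`. -/
theorem reynolds_exposing_vector {n m : ℕ}
    (𝒜 : Matrix (Fin n) (Fin n) ℝ →ₗ[ℝ] (Fin m → ℝ)) (b : Fin m → ℝ)
    (G : Finset (Matrix (Fin n) (Fin n) ℝ))
    (hone : (1 : Matrix (Fin n) (Fin n) ℝ) ∈ G)
    (hperm : ∀ P ∈ G, IsPermMatrix P)
    (hmul : ∀ P ∈ G, ∀ Q ∈ G, P * Q ∈ G)
    (hinv : ∀ P ∈ G, Pᵀ ∈ G)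
    (F : Set (Matrix (Fin n) (Fin n) ℝ))
    (hF : F = {X | X.PosSemidef ∧ 𝒜 X = b})
    (hinvar : ∀ X ∈ F, ∀ P ∈ G, P * X * Pᵀ ∈ F)
    (W : Matrix (Fin n) (Fin n) ℝ) (hW : W.PosSemidef)
    (d : ℕ) (hd : W.rank = d)
    (hexp : ∀ X ∈ F, Matrix.trace (Wᵀ * X) = 0) :
    let WG : Matrix (Fin n) (Fin n) ℝ := (G.card : ℝ)⁻¹ • ∑ P ∈ G, Pᵀ * W * P
    (∀ X ∈ F, Matrix.trace (WGᵀ * X) = 0) ∧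
      (∀ P ∈ G, P * WG = WG * P) ∧ d ≤ WG.rank := by
  intro WG
  have hcard : (G.card : ℝ) ≠ 0 := by
    have : G.Nonempty := ⟨1, hone⟩
    exact_mod_cast Finset.card_ne_zero_of_mem hone
  refine ⟨?_, ?_, ?_⟩
  · -- exposing
    intro X hX
    have : WGᵀ * X = (G.card : ℝ)⁻¹ • ∑ P ∈ G, (Pᵀ * W * P)ᵀ * X := by
      simp [WG, Matrix.transpose_smul, Matrix.transpose_sum, Matrix.smul_mul,
        Finset.sum_mul]
    rw [this, Matrix.trace_smul, Matrix.trace_sum]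
    have hz : ∀ P ∈ G, Matrix.trace ((Pᵀ * W * P)ᵀ * X) = 0 := by
      intro P hP
      have h1 : (Pᵀ * W * P)ᵀ * X = Pᵀ * Wᵀ * P * X := by
        simp [Matrix.transpose_mul, Matrix.mul_assoc]
      rw [h1]
      have h2 : Matrix.trace (Pᵀ * Wᵀ * P * X) = Matrix.trace (Wᵀ * (P * X * Pᵀ)) := by
        rw [show Pᵀ * Wᵀ * P * X = Pᵀ * (Wᵀ * (P * X)) by simp only [Matrix.mul_assoc],
          Matrix.trace_mul_comm,
          show Wᵀ * (P * X) * Pᵀ = Wᵀ * (P * X * Pᵀ) by simp only [Matrix.mul_assoc]]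
      rw [h2]
      exact hexp _ (hinvar X hX P hP)
    rw [Finset.sum_congr rfl hz]
    simp
  · -- commutant
    intro P hP
    have hPP : Pᵀ * P = 1 := (hperm P hP).transpose_mul_self
    have key : ∑ Q ∈ G, P * (Qᵀ * W * Q) = ∑ Q ∈ G, (Qᵀ * W * Q) * P := by
      refine Finset.sum_nbij' (fun Q => Q * Pᵀ) (fun R => R * P) ?_ ?_ ?_ ?_ ?_
      · intro Q hQ; exact hmul Q hQ Pᵀ (hinv P hP)
      · intro R hR; exact hmul R hR P hP
      · intro Q hQ
        simp [Matrix.mul_assoc, hPP]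
      · intro R hR
        simp [Matrix.mul_assoc, (hperm P hP).self_mul_transpose]
      · intro Q hQ
        show P * (Qᵀ * W * Q) = (Q * Pᵀ)ᵀ * W * (Q * Pᵀ) * P
        have ht : (Q * Pᵀ)ᵀ = P * Qᵀ := by simp
        rw [ht]
        calc P * (Qᵀ * W * Q)
            = P * Qᵀ * W * Q * (Pᵀ * P) := by rw [hPP]; simp [Matrix.mul_assoc]
          _ = P * Qᵀ * W * (Q * Pᵀ) * P := by simp [Matrix.mul_assoc]
    show P * ((G.card : ℝ)⁻¹ • ∑ Q ∈ G, Qᵀ * W * Q)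
        = ((G.card : ℝ)⁻¹ • ∑ Q ∈ G, Qᵀ * W * Q) * P
    rw [Matrix.mul_smul, Matrix.smul_mul, Finset.mul_sum, Finset.sum_mul, key]
  · -- rank
    have hker : ∀ x : Fin n → ℝ, WG *ᵥ x = 0 → W *ᵥ x = 0 := by
      intro x hx
      have hSx : (∑ P ∈ G, Pᵀ * W * P) *ᵥ x = 0 := by
        have : (G.card : ℝ)⁻¹ • ((∑ P ∈ G, Pᵀ * W * P) *ᵥ x) = 0 := by
          rw [← Matrix.smul_mulVec]; exact hx
        have h2 := congrArg (fun v => (G.card : ℝ) • v) this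
        simpa [smul_smul, mul_inv_cancel₀ hcard] using h2
      have hdot : ∑ P ∈ G, (P *ᵥ x) ⬝ᵥ (W *ᵥ (P *ᵥ x)) = 0 := by
        have h1 : x ⬝ᵥ ((∑ P ∈ G, Pᵀ * W * P) *ᵥ x) = 0 := by rw [hSx]; simp
        rw [sum_mulVec', dotProduct_sum'] at h1
        rw [← h1]
        refine Finset.sum_congr rfl fun P hP => ?_
        rw [← Matrix.mulVec_mulVec, ← Matrix.mulVec_mulVec, Matrix.dotProduct_mulVec x,
          Matrix.vecMul_transpose]
      have hnn : ∀ P ∈ G, 0 ≤ (P *ᵥ x) ⬝ᵥ (W *ᵥ (P *ᵥ x)) := by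
        intro P hP
        simpa using hW.dotProduct_mulVec_nonneg (P *ᵥ x)
      have hzero := (Finset.sum_eq_zero_iff_of_nonneg hnn).mp hdot
      have h1 := hzero 1 hone
      rw [Matrix.one_mulVec] at h1
      have := (hW.dotProduct_mulVec_zero_iff x).mp (by simpa using h1)
      exact this
    -- kernel inclusion gives rank inequality
    have hkerle : LinearMap.ker WG.mulVecLin ≤ LinearMap.ker W.mulVecLin := by
      intro x hx
      simp only [LinearMap.mem_ker, Matrix.mulVecLin_apply] at hx ⊢
      exact hker x hx
    have h1 := WG.mulVecLin.finrank_range_add_finrank_ker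
    have h2 := W.mulVecLin.finrank_range_add_finrank_ker
    have h3 : Module.finrank ℝ (LinearMap.ker WG.mulVecLin)
        ≤ Module.finrank ℝ (LinearMap.ker W.mulVecLin) :=
      Submodule.finrank_mono hkerle
    have hr1 : WG.rank = Module.finrank ℝ (LinearMap.range WG.mulVecLin) := rfl
    have hr2 : W.rank = Module.finrank ℝ (LinearMap.range W.mulVecLin) := rfl
    have : W.rank ≤ WG.rank := by
      rw [hr1, hr2]; omega
    omega
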